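/- arXiv:1603.06145 — 2 statements merged into one kernel-verified Lean document; each statement's English description precedes it below -/
import Mathlib

section
/- Let ξ: Ω → ℝ^q be a random vector with coordinates in L⁴ and Var(ξ) invertible, η: Ω → ℝ a random variable in L⁴, and W: Ω → ℝ^m a random vector. Suppose (a) the conditional expectation of η given σ(ξ) is linear, i.e. E[η | σ(ξ)] = E*(η | ξ) almost surely, and (b) σ(η) and σ(W) are conditionally independent given σ(ξ). Then for every bounded measurable φ: ℝ^q × ℝ^m → ℝ, one has E[(η − E*(η | ξ)) φ(ξ, W)] = 0, and consequently E[Cov*(η, φ(ξ, W) | ξ)] = 0. -/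
open MeasureTheory Matrix
open ENNReal Filter

/-- Mean vector of a random vector. -/
noncomputable def vmean {Ω : Type*} [MeasurableSpace Ω] (μ : Measure Ω)
    {ι : Type*} (ζ : Ω → ι → ℝ) : ι → ℝ :=
  fun i => ∫ ω, ζ ω i ∂μ

/-- Covariance matrix `Cov(ζ, ξ) = E[(ζ − Eζ)(ξ − Eξ)ᵀ]`. -/
noncomputable def covMatrix {Ω : Type*} [MeasurableSpace Ω] (μ : Measure Ω)
    {ι κ : Type*} (ζ : Ω → ι → ℝ) (ξ : Ω → κ → ℝ) : Matrix ι κ ℝ :=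
  Matrix.of fun i j =>
    ∫ ω, (ζ ω i - vmean μ ζ i) * (ξ ω j - vmean μ ξ j) ∂μ

/-- Variance matrix `Var(ξ) = E[(ξ − Eξ)(ξ − Eξ)ᵀ]`. -/
noncomputable def varMatrix {Ω : Type*} [MeasurableSpace Ω] (μ : Measure Ω)
    {ι : Type*} (ξ : Ω → ι → ℝ) : Matrix ι ι ℝ :=
  covMatrix μ ξ ξ

/-- Scalar covariance `Cov(ζ₁, ζ₂)`. -/
noncomputable def scov {Ω : Type*} [MeasurableSpace Ω] (μ : Measure Ω)
    (ζ₁ ζ₂ : Ω → ℝ) : ℝ :=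
  ∫ ω, (ζ₁ ω - ∫ ω', ζ₁ ω' ∂μ) * (ζ₂ ω - ∫ ω', ζ₂ ω' ∂μ) ∂μ

/-- Covariance vector `Cov(ζ, ξ) = E[(ζ − Eζ)(ξ − Eξ)ᵀ]` of a real random variable `ζ`
against a random vector `ξ`. -/
noncomputable def covVec {Ω : Type*} [MeasurableSpace Ω] (μ : Measure Ω)
    {κ : Type*} (ζ : Ω → ℝ) (ξ : Ω → κ → ℝ) : κ → ℝ :=
  fun i => ∫ ω, (ζ ω - ∫ ω', ζ ω' ∂μ) * (ξ ω i - vmean μ ξ i) ∂μ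

/-- Conditional linear expectation of a real random variable:
`E*(ζ | ξ) = E[ζ] + Cov(ζ, ξ) Var(ξ)⁻¹ (ξ − Eξ)`. -/
noncomputable def scle {Ω : Type*} [MeasurableSpace Ω] (μ : Measure Ω)
    {κ : Type*} [Fintype κ] [DecidableEq κ]
    (ζ : Ω → ℝ) (ξ : Ω → κ → ℝ) : Ω → ℝ :=
  fun ω => (∫ ω', ζ ω' ∂μ) +
    ∑ i, covVec μ ζ ξ i *
      (varMatrix μ ξ)⁻¹.mulVec (fun i' => ξ ω i' - vmean μ ξ i') i

/-- Conditional linear covariance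
`Cov*(ζ₁, ζ₂ | ξ) = E*((ζ₁ − E*(ζ₁|ξ))(ζ₂ − E*(ζ₂|ξ)) | ξ)`. -/
noncomputable def ccov {Ω : Type*} [MeasurableSpace Ω] (μ : Measure Ω)
    {κ : Type*} [Fintype κ] [DecidableEq κ]
    (ζ₁ ζ₂ : Ω → ℝ) (ξ : Ω → κ → ℝ) : Ω → ℝ :=
  scle μ (fun ω => (ζ₁ ω - scle μ ζ₁ ξ ω) * (ζ₂ ω - scle μ ζ₂ ξ ω)) ξ


section ResidualAux
variable {Ω : Type*} [MeasurableSpace Ω] {μ : Measure Ω}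


lemma integrable_mul_of_L2 {f g : Ω → ℝ} (hf : MemLp f 2 μ) (hg : MemLp g 2 μ) :
    Integrable (fun ω => f ω * g ω) μ := by
  have h := hg.smul (φ := f) hf (r := 1)
  exact memLp_one_iff_integrable.mp h

noncomputable def trunc (N : ℕ) (x : ℝ) : ℝ := max (-(N:ℝ)) (min (N:ℝ) x)

lemma trunc_meas (N : ℕ) : Measurable (trunc N) :=
  measurable_const.max (measurable_const.min measurable_id)

lemma trunc_abs_le (N : ℕ) (x : ℝ) : |trunc N x| ≤ (N:ℝ) := by
  rw [abs_le]
  constructor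
  · exact le_max_left _ _
  · exact max_le (by simp) ((min_le_left _ _))

lemma trunc_abs_le_abs (N : ℕ) (x : ℝ) : |trunc N x| ≤ |x| := by
  rw [abs_le]
  constructor
  · refine le_trans ?_ (le_max_right _ _)
    exact le_min (le_trans (neg_nonpos.mpr (abs_nonneg x)) (Nat.cast_nonneg N)) (neg_abs_le x)
  · exact max_le (le_trans (by simp [neg_nonpos]) (abs_nonneg x))
      (le_trans (min_le_right _ _) (le_abs_self x))

lemma trunc_tendsto (x : ℝ) :
    Filter.Tendsto (fun N : ℕ => trunc N x) Filter.atTop (nhds x) := by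
  apply Filter.Tendsto.congr' (f₁ := fun _ => x) _ tendsto_const_nhds
  filter_upwards [Filter.eventually_ge_atTop ⌈|x|⌉₊] with N hN
  have hNx : |x| ≤ (N:ℝ) := le_trans (Nat.le_ceil _) (by exact_mod_cast hN)
  rw [abs_le] at hNx
  unfold trunc
  rw [min_eq_right hNx.2, max_eq_right (by linarith [hNx.1])]

end ResidualAux

section Aux
variable {Ω : Type*} [MeasurableSpace Ω] {μ : Measure Ω}

lemma scle_eq {q : ℕ} (ξ : Ω → Fin q → ℝ) (ζ : Ω → ℝ) :
    scle μ ζ ξ = fun ω => (∫ ω', ζ ω' ∂μ) +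
      ∑ i, covVec μ ζ ξ i * ∑ j, (varMatrix μ ξ)⁻¹ i j * (ξ ω j - vmean μ ξ j) := by
  funext ω
  simp [scle, Matrix.mulVec, dotProduct]

lemma memLp_scle [IsFiniteMeasure μ] {q : ℕ} {ξ : Ω → Fin q → ℝ} {p : ℝ≥0∞}
    (hξp : ∀ i, MemLp (fun ω => ξ ω i) p μ) (ζ : Ω → ℝ) :
    MemLp (scle μ ζ ξ) p μ := by
  rw [scle_eq]
  refine MemLp.add (f := fun _ => ∫ ω', ζ ω' ∂μ) (memLp_const _) (memLp_finsetSum (ε' := ℝ) _ fun i _ => ?_)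
  exact (memLp_finsetSum (ε' := ℝ) _ fun j _ =>
    ((hξp j).sub (memLp_const _)).const_mul _).const_mul _

lemma stronglyMeasurable_scle_comap {q : ℕ} (ξ : Ω → Fin q → ℝ) (ζ : Ω → ℝ) :
    StronglyMeasurable[MeasurableSpace.comap ξ inferInstance] (scle μ ζ ξ) := by
  have hξm : @Measurable Ω _ (MeasurableSpace.comap ξ inferInstance) _ ξ :=
    measurable_iff_comap_le.mpr le_rfl
  have heq : scle μ ζ ξ = (fun x : Fin q → ℝ => (∫ ω', ζ ω' ∂μ) +
      ∑ i, covVec μ ζ ξ i * ∑ j, (varMatrix μ ξ)⁻¹ i j * (x j - vmean μ ξ j)) ∘ ξ := by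
    funext ω
    simp [scle, Matrix.mulVec, dotProduct]
  rw [heq]
  refine (Measurable.comp ?_ hξm).stronglyMeasurable
  exact measurable_const.add (Finset.measurable_sum _ fun i _ =>
    (Finset.measurable_sum _ fun j _ =>
      ((measurable_pi_apply j).sub measurable_const).const_mul _).const_mul _)

lemma integral_scle [IsProbabilityMeasure μ] {q : ℕ} {ξ : Ω → Fin q → ℝ}
    (hξ1 : ∀ i, Integrable (fun ω => ξ ω i) μ) (ζ : Ω → ℝ) :
    ∫ ω, scle μ ζ ξ ω ∂μ = ∫ ω, ζ ω ∂μ := by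
  rw [scle_eq]
  have hterm : ∀ (i j : Fin q),
      Integrable (fun ω => (varMatrix μ ξ)⁻¹ i j * (ξ ω j - vmean μ ξ j)) μ :=
    fun i j => (((hξ1 j).sub (integrable_const _)).const_mul _)
  have hsum : ∀ i : Fin q, Integrable
      (fun ω => covVec μ ζ ξ i * ∑ j, (varMatrix μ ξ)⁻¹ i j * (ξ ω j - vmean μ ξ j)) μ :=
    fun i => (integrable_finset_sum _ fun j _ => hterm i j).const_mul _
  rw [integral_add (integrable_const _) (integrable_finset_sum _ fun i _ => hsum i),
    integral_finset_sum _ fun i _ => hsum i]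
  have hzero : ∀ j : Fin q, ∫ ω, (ξ ω j - vmean μ ξ j) ∂μ = 0 := by
    intro j
    rw [integral_sub (hξ1 j) (integrable_const _), integral_const]
    simp [vmean]
  have : ∀ i : Fin q,
      ∫ ω, covVec μ ζ ξ i * ∑ j, (varMatrix μ ξ)⁻¹ i j * (ξ ω j - vmean μ ξ j) ∂μ = 0 := by
    intro i
    rw [integral_const_mul, integral_finset_sum _ fun j _ => hterm i j]
    simp only [integral_const_mul, hzero, mul_zero, Finset.sum_const_zero]
  simp [this]

lemma integrable_mul_of_L2' {f g : Ω → ℝ} (hf : MemLp f 2 μ) (hg : MemLp g 2 μ) :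
    Integrable (fun ω => f ω * g ω) μ := by
  have h := hg.smul (φ := f) hf (r := 1)
  exact memLp_one_iff_integrable.mp h

lemma resid_orth [IsProbabilityMeasure μ] {q : ℕ} {ξ : Ω → Fin q → ℝ}
    (hξ2 : ∀ i, MemLp (fun ω => ξ ω i) 2 μ) {η : Ω → ℝ} (hη2 : MemLp η 2 μ)
    (hVar : IsUnit (varMatrix μ ξ)) (j : Fin q) :
    ∫ ω, (η ω - scle μ η ξ ω) * (ξ ω j - vmean μ ξ j) ∂μ = 0 := by
  have hMV : (varMatrix μ ξ)⁻¹ * varMatrix μ ξ = 1 :=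
    Matrix.nonsing_inv_mul _ ((Matrix.isUnit_iff_isUnit_det _).mp hVar)
  have key : ∀ ω, (η ω - scle μ η ξ ω) * (ξ ω j - vmean μ ξ j)
      = (η ω - ∫ ω', η ω' ∂μ) * (ξ ω j - vmean μ ξ j)
        - ∑ i, covVec μ η ξ i * ∑ k, (varMatrix μ ξ)⁻¹ i k *
            ((ξ ω k - vmean μ ξ k) * (ξ ω j - vmean μ ξ j)) := by
    intro ω
    have hs : scle μ η ξ ω = (∫ ω', η ω' ∂μ) +
        ∑ i, covVec μ η ξ i * ∑ k, (varMatrix μ ξ)⁻¹ i k * (ξ ω k - vmean μ ξ k) := by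
      simp [scle, Matrix.mulVec, dotProduct]
    rw [hs, show (η ω - ((∫ ω', η ω' ∂μ) +
        ∑ i, covVec μ η ξ i * ∑ k, (varMatrix μ ξ)⁻¹ i k * (ξ ω k - vmean μ ξ k)))
          * (ξ ω j - vmean μ ξ j)
        = (η ω - ∫ ω', η ω' ∂μ) * (ξ ω j - vmean μ ξ j)
          - (∑ i, covVec μ η ξ i * ∑ k, (varMatrix μ ξ)⁻¹ i k * (ξ ω k - vmean μ ξ k))
            * (ξ ω j - vmean μ ξ j) from by ring]
    congr 1
    rw [Finset.sum_mul]
    refine Finset.sum_congr rfl fun i _ => ?_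
    rw [mul_assoc, Finset.sum_mul]
    exact congrArg _ (Finset.sum_congr rfl fun k _ => mul_assoc _ _ _)
  have hint1 : Integrable (fun ω => (η ω - ∫ ω', η ω' ∂μ) * (ξ ω j - vmean μ ξ j)) μ :=
    integrable_mul_of_L2' (hη2.sub (memLp_const _)) ((hξ2 j).sub (memLp_const _))
  have hintkj : ∀ k : Fin q,
      Integrable (fun ω => (ξ ω k - vmean μ ξ k) * (ξ ω j - vmean μ ξ j)) μ :=
    fun k => integrable_mul_of_L2' ((hξ2 k).sub (memLp_const _)) ((hξ2 j).sub (memLp_const _))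
  have hterm : ∀ (i k : Fin q), Integrable (fun ω => (varMatrix μ ξ)⁻¹ i k *
      ((ξ ω k - vmean μ ξ k) * (ξ ω j - vmean μ ξ j))) μ :=
    fun i k => (hintkj k).const_mul _
  have hsum : ∀ i : Fin q, Integrable (fun ω => covVec μ η ξ i *
      ∑ k, (varMatrix μ ξ)⁻¹ i k * ((ξ ω k - vmean μ ξ k) * (ξ ω j - vmean μ ξ j))) μ :=
    fun i => (integrable_finset_sum _ fun k _ => hterm i k).const_mul _
  calc ∫ ω, (η ω - scle μ η ξ ω) * (ξ ω j - vmean μ ξ j) ∂μ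
      = ∫ ω, ((η ω - ∫ ω', η ω' ∂μ) * (ξ ω j - vmean μ ξ j)
        - ∑ i, covVec μ η ξ i * ∑ k, (varMatrix μ ξ)⁻¹ i k *
            ((ξ ω k - vmean μ ξ k) * (ξ ω j - vmean μ ξ j))) ∂μ := by
        exact integral_congr_ae (Filter.Eventually.of_forall fun ω => key ω)
    _ = 0 := by
        rw [integral_sub hint1 (integrable_finset_sum _ fun i _ => hsum i),
          integral_finset_sum _ fun i _ => hsum i]
        have hvar : ∀ i k : Fin q,
            ∫ ω, (varMatrix μ ξ)⁻¹ i k * ((ξ ω k - vmean μ ξ k) * (ξ ω j - vmean μ ξ j)) ∂μ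
              = (varMatrix μ ξ)⁻¹ i k * varMatrix μ ξ k j := by
          intro i k
          rw [integral_const_mul]
          rfl
        have hIVsum : ∀ i : Fin q, ∫ ω, covVec μ η ξ i *
            ∑ k, (varMatrix μ ξ)⁻¹ i k * ((ξ ω k - vmean μ ξ k) * (ξ ω j - vmean μ ξ j)) ∂μ
              = covVec μ η ξ i * ((varMatrix μ ξ)⁻¹ * varMatrix μ ξ) i j := by
          intro i
          rw [integral_const_mul, integral_finset_sum _ fun k _ => hterm i k]
          congr 1
          rw [Matrix.mul_apply]
          exact Finset.sum_congr rfl fun k _ => hvar i k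
        simp only [hIVsum, hMV, Matrix.one_apply]
        have : ∫ ω, (η ω - ∫ ω', η ω' ∂μ) * (ξ ω j - vmean μ ξ j) ∂μ = covVec μ η ξ j := rfl
        rw [this]
        simp [Finset.sum_ite_eq', Finset.mem_univ]


end Aux

lemma rect_zero {Ω : Type*} [MeasurableSpace Ω] {μ : Measure Ω} [IsProbabilityMeasure μ]
    {q mm : ℕ} {ξ : Ω → Fin q → ℝ} {η : Ω → ℝ} {W : Ω → Fin mm → ℝ}
    (hξmeas : Measurable ξ) (hηmeas : Measurable η) (hWmeas : Measurable W)
    (hηint : Integrable η μ) {mf : Ω → ℝ}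
    (hmf_meas : StronglyMeasurable[MeasurableSpace.comap ξ inferInstance] mf)
    (hmfint : Integrable mf μ)
    (hlin : μ[η | MeasurableSpace.comap ξ inferInstance] =ᵐ[μ] mf)
    (hci : ∀ (f : ℝ → ℝ) (g : (Fin mm → ℝ) → ℝ), Measurable f → Measurable g →
      (∃ Bf, ∀ x, |f x| ≤ Bf) → (∃ Bg, ∀ x, |g x| ≤ Bg) →
      μ[fun ω => f (η ω) * g (W ω) | MeasurableSpace.comap ξ inferInstance]
        =ᵐ[μ] fun ω => ((μ[fun ω' => f (η ω') | MeasurableSpace.comap ξ inferInstance]) ω)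
          * ((μ[fun ω' => g (W ω') | MeasurableSpace.comap ξ inferInstance]) ω))
    {S : Set (Fin q → ℝ)} {T : Set (Fin mm → ℝ)} (hS : MeasurableSet S) (hT : MeasurableSet T) :
    ∫ ω, (η ω - mf ω) * (S.indicator 1 (ξ ω) * T.indicator 1 (W ω)) ∂μ = 0 := by
  classical
  have hG : MeasurableSpace.comap ξ inferInstance ≤ ‹MeasurableSpace Ω› := hξmeas.comap_le
  have hξG : @Measurable Ω _ (MeasurableSpace.comap ξ inferInstance) _ ξ := measurable_iff_comap_le.mpr le_rfl
  -- basic boundedness and measurability of indicators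
  have hiT_bd : ∀ x, |Set.indicator T (1 : (Fin mm → ℝ) → ℝ) x| ≤ (1:ℝ) := by
    intro x; rw [Set.indicator_apply]; split <;> simp
  have hiS_bd : ∀ x, |Set.indicator S (1 : (Fin q → ℝ) → ℝ) x| ≤ (1:ℝ) := by
    intro x; rw [Set.indicator_apply]; split <;> simp
  have hgT : Measurable (T.indicator (1 : (Fin mm → ℝ) → ℝ)) := measurable_one.indicator hT
  have hgS : Measurable (S.indicator (1 : (Fin q → ℝ) → ℝ)) := measurable_one.indicator hS
  have hiTmeas : Measurable (fun ω => T.indicator (1 : (Fin mm → ℝ) → ℝ) (W ω)) :=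
    hgT.comp hWmeas
  have hiSmeas : Measurable (fun ω => S.indicator (1 : (Fin q → ℝ) → ℝ) (ξ ω)) :=
    hgS.comp hξmeas
  have hiS_G : StronglyMeasurable[MeasurableSpace.comap ξ inferInstance] (fun ω => S.indicator (1 : (Fin q → ℝ) → ℝ) (ξ ω)) :=
    (hgS.comp hξG).stronglyMeasurable
  -- helper: bounded measurable functions are integrable
  have hbint : ∀ (h : Ω → ℝ) (c : ℝ), Measurable h → (∀ ω, |h ω| ≤ c) → Integrable h μ := by
    intro h c hm hb
    refine Integrable.mono' (integrable_const c) hm.aestronglyMeasurable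
      (Filter.Eventually.of_forall fun ω => ?_)
    simpa [Real.norm_eq_abs] using hb ω
  have hiTint : Integrable (fun ω => T.indicator (1 : (Fin mm → ℝ) → ℝ) (W ω)) μ :=
    hbint _ 1 hiTmeas fun ω => hiT_bd _
  -- the conditional expectation of the T-indicator
  have hhT_G : StronglyMeasurable[MeasurableSpace.comap ξ inferInstance]
      (μ[fun ω' => T.indicator (1 : (Fin mm → ℝ) → ℝ) (W ω') | MeasurableSpace.comap ξ inferInstance]) := stronglyMeasurable_condExp
  have hhT_bd : ∀ᵐ ω ∂μ,
      |(μ[fun ω' => T.indicator (1 : (Fin mm → ℝ) → ℝ) (W ω') | MeasurableSpace.comap ξ inferInstance]) ω| ≤ (1:ℝ) := by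
    have := ae_bdd_condExp_of_ae_bdd (m := MeasurableSpace.comap ξ inferInstance) (μ := μ) (R := 1)
      (f := fun ω' => T.indicator (1 : (Fin mm → ℝ) → ℝ) (W ω'))
      (Filter.Eventually.of_forall fun ω => by simpa using hiT_bd (W ω))
    simpa using this
  have hhT_meas : AEStronglyMeasurable
      (μ[fun ω' => T.indicator (1 : (Fin mm → ℝ) → ℝ) (W ω') | MeasurableSpace.comap ξ inferInstance]) μ :=
    (hhT_G.mono hG).aestronglyMeasurable
  -- the G-measurable bounded weight k = iS * hT
  have hk_G : StronglyMeasurable[MeasurableSpace.comap ξ inferInstance] (fun ω => S.indicator (1 : (Fin q → ℝ) → ℝ) (ξ ω) *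
      (μ[fun ω' => T.indicator (1 : (Fin mm → ℝ) → ℝ) (W ω') | MeasurableSpace.comap ξ inferInstance]) ω) :=
    hiS_G.mul hhT_G
  have hk_bd : ∀ᵐ ω ∂μ, |S.indicator (1 : (Fin q → ℝ) → ℝ) (ξ ω) *
      (μ[fun ω' => T.indicator (1 : (Fin mm → ℝ) → ℝ) (W ω') | MeasurableSpace.comap ξ inferInstance]) ω| ≤ (1:ℝ) := by
    filter_upwards [hhT_bd] with ω hω
    rw [abs_mul]
    exact mul_le_one₀ (hiS_bd _) (abs_nonneg _) hω
  have hkmeas : AEStronglyMeasurable (fun ω => S.indicator (1 : (Fin q → ℝ) → ℝ) (ξ ω) *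
      (μ[fun ω' => T.indicator (1 : (Fin mm → ℝ) → ℝ) (W ω') | MeasurableSpace.comap ξ inferInstance]) ω) μ :=
    hiSmeas.aestronglyMeasurable.mul hhT_meas
  have hkint : Integrable (fun ω => S.indicator (1 : (Fin q → ℝ) → ℝ) (ξ ω) *
      (μ[fun ω' => T.indicator (1 : (Fin mm → ℝ) → ℝ) (W ω') | MeasurableSpace.comap ξ inferInstance]) ω) μ :=
    Integrable.bdd_mul (c := 1) integrable_condExp hiSmeas.aestronglyMeasurable
      (Filter.Eventually.of_forall fun ω => by simpa [Real.norm_eq_abs] using hiS_bd (ξ ω))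
  
  -- Step 1: the key identity for truncations
  have step1 : ∀ N : ℕ,
      ∫ ω, trunc N (η ω) * (S.indicator 1 (ξ ω) * T.indicator 1 (W ω)) ∂μ
        = ∫ ω, trunc N (η ω) * (S.indicator 1 (ξ ω) *
            (μ[fun ω' => T.indicator (1 : (Fin mm → ℝ) → ℝ) (W ω') | MeasurableSpace.comap ξ inferInstance]) ω) ∂μ := by
    intro N
    have htr_meas : Measurable (fun ω => trunc N (η ω)) := (trunc_meas N).comp hηmeas
    have htr_int : Integrable (fun ω => trunc N (η ω)) μ :=
      hbint _ N htr_meas fun ω => trunc_abs_le N _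
    have hfTint : Integrable (fun ω => trunc N (η ω) * T.indicator 1 (W ω)) μ := by
      refine hbint _ (N : ℝ) (htr_meas.mul hiTmeas) fun ω => ?_
      rw [abs_mul]
      calc |trunc N (η ω)| * |T.indicator 1 (W ω)| ≤ (N:ℝ) * 1 :=
            mul_le_mul (trunc_abs_le N _) (hiT_bd _) (abs_nonneg _) (Nat.cast_nonneg N)
        _ = (N:ℝ) := mul_one _
    have hSfTint : Integrable
        (fun ω => S.indicator 1 (ξ ω) * (trunc N (η ω) * T.indicator 1 (W ω))) μ :=
      Integrable.bdd_mul (c := 1) hfTint hiSmeas.aestronglyMeasurable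
        (Filter.Eventually.of_forall fun ω => by simpa [Real.norm_eq_abs] using hiS_bd (ξ ω))
    -- pull-out on the left
    have hpull1 : (μ[(fun ω => S.indicator (1 : (Fin q → ℝ) → ℝ) (ξ ω)) *
          (fun ω => trunc N (η ω) * T.indicator 1 (W ω)) | MeasurableSpace.comap ξ inferInstance])
        =ᵐ[μ] (fun ω => S.indicator (1 : (Fin q → ℝ) → ℝ) (ξ ω)) *
          (μ[fun ω => trunc N (η ω) * T.indicator 1 (W ω) | MeasurableSpace.comap ξ inferInstance]) :=
      condExp_mul_of_stronglyMeasurable_left hiS_G hSfTint hfTint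
    have hciN := hci (trunc N) (T.indicator 1) (trunc_meas N) hgT
      ⟨N, fun x => trunc_abs_le N x⟩ ⟨1, fun x => hiT_bd x⟩
    -- pull-out on the right with weight k
    have hkfint : Integrable (fun ω => (S.indicator (1 : (Fin q → ℝ) → ℝ) (ξ ω) *
        (μ[fun ω' => T.indicator (1 : (Fin mm → ℝ) → ℝ) (W ω') | MeasurableSpace.comap ξ inferInstance]) ω) *
          trunc N (η ω)) μ :=
      Integrable.bdd_mul (c := 1) htr_int hkmeas hk_bd
    have hpull2 : (μ[(fun ω => S.indicator (1 : (Fin q → ℝ) → ℝ) (ξ ω) *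
            (μ[fun ω' => T.indicator (1 : (Fin mm → ℝ) → ℝ) (W ω') | MeasurableSpace.comap ξ inferInstance]) ω) *
          (fun ω => trunc N (η ω)) | MeasurableSpace.comap ξ inferInstance])
        =ᵐ[μ] (fun ω => S.indicator (1 : (Fin q → ℝ) → ℝ) (ξ ω) *
            (μ[fun ω' => T.indicator (1 : (Fin mm → ℝ) → ℝ) (W ω') | MeasurableSpace.comap ξ inferInstance]) ω) *
          (μ[fun ω => trunc N (η ω) | MeasurableSpace.comap ξ inferInstance]) :=
      condExp_mul_of_stronglyMeasurable_left hk_G hkfint htr_int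
    calc ∫ ω, trunc N (η ω) * (S.indicator 1 (ξ ω) * T.indicator 1 (W ω)) ∂μ
        = ∫ ω, S.indicator 1 (ξ ω) * (trunc N (η ω) * T.indicator 1 (W ω)) ∂μ :=
          integral_congr_ae (Filter.Eventually.of_forall fun ω => by ring)
      _ = ∫ ω, (μ[(fun ω => S.indicator (1 : (Fin q → ℝ) → ℝ) (ξ ω)) *
            (fun ω => trunc N (η ω) * T.indicator 1 (W ω)) | MeasurableSpace.comap ξ inferInstance]) ω ∂μ :=
          (integral_condExp hG).symm
      _ = ∫ ω, S.indicator 1 (ξ ω) *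
            (μ[fun ω => trunc N (η ω) * T.indicator 1 (W ω) | MeasurableSpace.comap ξ inferInstance]) ω ∂μ :=
          integral_congr_ae hpull1
      _ = ∫ ω, S.indicator 1 (ξ ω) *
            ((μ[fun ω' => trunc N (η ω') | MeasurableSpace.comap ξ inferInstance]) ω *
             (μ[fun ω' => T.indicator (1 : (Fin mm → ℝ) → ℝ) (W ω') | MeasurableSpace.comap ξ inferInstance]) ω) ∂μ := by
          refine integral_congr_ae ?_
          filter_upwards [hciN] with ω hω
          rw [hω]
      _ = ∫ ω, (S.indicator 1 (ξ ω) *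
            (μ[fun ω' => T.indicator (1 : (Fin mm → ℝ) → ℝ) (W ω') | MeasurableSpace.comap ξ inferInstance]) ω) *
            (μ[fun ω' => trunc N (η ω') | MeasurableSpace.comap ξ inferInstance]) ω ∂μ :=
          integral_congr_ae (Filter.Eventually.of_forall fun ω => by ring)
      _ = ∫ ω, (μ[(fun ω => S.indicator (1 : (Fin q → ℝ) → ℝ) (ξ ω) *
            (μ[fun ω' => T.indicator (1 : (Fin mm → ℝ) → ℝ) (W ω') | MeasurableSpace.comap ξ inferInstance]) ω) *
            (fun ω => trunc N (η ω)) | MeasurableSpace.comap ξ inferInstance]) ω ∂μ :=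
          (integral_congr_ae hpull2).symm
      _ = ∫ ω, (S.indicator 1 (ξ ω) *
            (μ[fun ω' => T.indicator (1 : (Fin mm → ℝ) → ℝ) (W ω') | MeasurableSpace.comap ξ inferInstance]) ω) *
            trunc N (η ω) ∂μ := integral_condExp hG
      _ = ∫ ω, trunc N (η ω) * (S.indicator 1 (ξ ω) *
            (μ[fun ω' => T.indicator (1 : (Fin mm → ℝ) → ℝ) (W ω') | MeasurableSpace.comap ξ inferInstance]) ω) ∂μ :=
          integral_congr_ae (Filter.Eventually.of_forall fun ω => by ring)
  -- Step 2: pass to the limit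
  have lim1 : Filter.Tendsto
      (fun N : ℕ => ∫ ω, trunc N (η ω) * (S.indicator 1 (ξ ω) * T.indicator 1 (W ω)) ∂μ)
      Filter.atTop (nhds (∫ ω, η ω * (S.indicator 1 (ξ ω) * T.indicator 1 (W ω)) ∂μ)) := by
    refine tendsto_integral_of_dominated_convergence (fun ω => |η ω|)
      (fun N => (((trunc_meas N).comp hηmeas).mul (hiSmeas.mul hiTmeas)).aestronglyMeasurable)
      hηint.abs (fun N => Filter.Eventually.of_forall fun ω => ?_)
      (Filter.Eventually.of_forall fun ω => ?_)
    · rw [Real.norm_eq_abs, abs_mul]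
      calc |trunc N (η ω)| * |S.indicator 1 (ξ ω) * T.indicator 1 (W ω)| ≤ |η ω| * 1 := by
            refine mul_le_mul (trunc_abs_le_abs N _) ?_ (abs_nonneg _) (abs_nonneg _)
            rw [abs_mul]
            calc |S.indicator 1 (ξ ω)| * |T.indicator 1 (W ω)| ≤ 1 * 1 :=
                  mul_le_mul (hiS_bd _) (hiT_bd _) (abs_nonneg _) zero_le_one
              _ = 1 := mul_one _
        _ = |η ω| := mul_one _
    · exact (trunc_tendsto (η ω)).mul_const _
  have lim2 : Filter.Tendsto
      (fun N : ℕ => ∫ ω, trunc N (η ω) * (S.indicator 1 (ξ ω) *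
          (μ[fun ω' => T.indicator (1 : (Fin mm → ℝ) → ℝ) (W ω') | MeasurableSpace.comap ξ inferInstance]) ω) ∂μ)
      Filter.atTop (nhds (∫ ω, η ω * (S.indicator 1 (ξ ω) *
          (μ[fun ω' => T.indicator (1 : (Fin mm → ℝ) → ℝ) (W ω') | MeasurableSpace.comap ξ inferInstance]) ω) ∂μ)) := by
    refine tendsto_integral_of_dominated_convergence (fun ω => |η ω|)
      (fun N => (((trunc_meas N).comp hηmeas).aestronglyMeasurable.mul hkmeas))
      hηint.abs (fun N => ?_) (Filter.Eventually.of_forall fun ω => ?_)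
    · filter_upwards [hk_bd] with ω hω
      rw [Real.norm_eq_abs, abs_mul]
      calc |trunc N (η ω)| * |S.indicator 1 (ξ ω) *
            (μ[fun ω' => T.indicator (1 : (Fin mm → ℝ) → ℝ) (W ω') | MeasurableSpace.comap ξ inferInstance]) ω| ≤ |η ω| * 1 :=
            mul_le_mul (trunc_abs_le_abs N _) hω (abs_nonneg _) (abs_nonneg _)
        _ = |η ω| := mul_one _
    · exact (trunc_tendsto (η ω)).mul_const _
  have EAB : ∫ ω, η ω * (S.indicator 1 (ξ ω) * T.indicator 1 (W ω)) ∂μ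
      = ∫ ω, η ω * (S.indicator 1 (ξ ω) *
          (μ[fun ω' => T.indicator (1 : (Fin mm → ℝ) → ℝ) (W ω') | MeasurableSpace.comap ξ inferInstance]) ω) ∂μ :=
    tendsto_nhds_unique (lim1.congr step1) lim2
  
  -- boundedness of iS*iT
  have hiSiT_bd : ∀ ω, |S.indicator (1 : (Fin q → ℝ) → ℝ) (ξ ω) * T.indicator 1 (W ω)| ≤ (1:ℝ) := by
    intro ω
    rw [abs_mul]
    calc |S.indicator 1 (ξ ω)| * |T.indicator 1 (W ω)| ≤ 1 * 1 :=
          mul_le_mul (hiS_bd _) (hiT_bd _) (abs_nonneg _) zero_le_one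
      _ = 1 := mul_one _
  -- Step 3
  have step3 : ∫ ω, mf ω * (S.indicator 1 (ξ ω) * T.indicator 1 (W ω)) ∂μ
      = ∫ ω, mf ω * (S.indicator 1 (ξ ω) *
          (μ[fun ω' => T.indicator (1 : (Fin mm → ℝ) → ℝ) (W ω') | MeasurableSpace.comap ξ inferInstance]) ω) ∂μ := by
    have hmfiS_G : StronglyMeasurable[MeasurableSpace.comap ξ inferInstance]
        (fun ω => mf ω * S.indicator (1 : (Fin q → ℝ) → ℝ) (ξ ω)) := hmf_meas.mul hiS_G
    have hint1 : Integrable (fun ω => (S.indicator (1 : (Fin q → ℝ) → ℝ) (ξ ω) *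
        T.indicator 1 (W ω)) * mf ω) μ :=
      Integrable.bdd_mul (c := 1) hmfint (hiSmeas.mul hiTmeas).aestronglyMeasurable
        (Filter.Eventually.of_forall fun ω => by
          simpa [Real.norm_eq_abs, abs_mul] using hiSiT_bd ω)
    have hint2 : Integrable (fun ω => (mf ω * S.indicator (1 : (Fin q → ℝ) → ℝ) (ξ ω)) *
        T.indicator 1 (W ω)) μ :=
      hint1.congr (Filter.Eventually.of_forall fun ω => by ring)
    have hpull3 : (μ[(fun ω => mf ω * S.indicator (1 : (Fin q → ℝ) → ℝ) (ξ ω)) *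
          (fun ω => T.indicator (1 : (Fin mm → ℝ) → ℝ) (W ω)) | MeasurableSpace.comap ξ inferInstance])
        =ᵐ[μ] (fun ω => mf ω * S.indicator (1 : (Fin q → ℝ) → ℝ) (ξ ω)) *
          (μ[fun ω => T.indicator (1 : (Fin mm → ℝ) → ℝ) (W ω) | MeasurableSpace.comap ξ inferInstance]) :=
      condExp_mul_of_stronglyMeasurable_left hmfiS_G hint2 hiTint
    calc ∫ ω, mf ω * (S.indicator 1 (ξ ω) * T.indicator 1 (W ω)) ∂μ
        = ∫ ω, (mf ω * S.indicator 1 (ξ ω)) * T.indicator 1 (W ω) ∂μ :=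
          integral_congr_ae (Filter.Eventually.of_forall fun ω => by ring)
      _ = ∫ ω, (μ[(fun ω => mf ω * S.indicator (1 : (Fin q → ℝ) → ℝ) (ξ ω)) *
            (fun ω => T.indicator (1 : (Fin mm → ℝ) → ℝ) (W ω)) | MeasurableSpace.comap ξ inferInstance]) ω ∂μ :=
          (integral_condExp hG).symm
      _ = ∫ ω, (mf ω * S.indicator 1 (ξ ω)) *
            (μ[fun ω => T.indicator (1 : (Fin mm → ℝ) → ℝ) (W ω) | MeasurableSpace.comap ξ inferInstance]) ω ∂μ :=
          integral_congr_ae hpull3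
      _ = ∫ ω, mf ω * (S.indicator 1 (ξ ω) *
            (μ[fun ω' => T.indicator (1 : (Fin mm → ℝ) → ℝ) (W ω') | MeasurableSpace.comap ξ inferInstance]) ω) ∂μ :=
          integral_congr_ae (Filter.Eventually.of_forall fun ω => by ring)
  -- Step 4
  have step4 : ∫ ω, η ω * (S.indicator 1 (ξ ω) *
        (μ[fun ω' => T.indicator (1 : (Fin mm → ℝ) → ℝ) (W ω') | MeasurableSpace.comap ξ inferInstance]) ω) ∂μ
      = ∫ ω, mf ω * (S.indicator 1 (ξ ω) *
        (μ[fun ω' => T.indicator (1 : (Fin mm → ℝ) → ℝ) (W ω') | MeasurableSpace.comap ξ inferInstance]) ω) ∂μ := by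
    have hkηint : Integrable (fun ω => (S.indicator (1 : (Fin q → ℝ) → ℝ) (ξ ω) *
        (μ[fun ω' => T.indicator (1 : (Fin mm → ℝ) → ℝ) (W ω') | MeasurableSpace.comap ξ inferInstance]) ω) * η ω) μ :=
      Integrable.bdd_mul (c := 1) hηint hkmeas hk_bd
    have hpull4 : (μ[(fun ω => S.indicator (1 : (Fin q → ℝ) → ℝ) (ξ ω) *
          (μ[fun ω' => T.indicator (1 : (Fin mm → ℝ) → ℝ) (W ω') | MeasurableSpace.comap ξ inferInstance]) ω) * η | MeasurableSpace.comap ξ inferInstance])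
        =ᵐ[μ] (fun ω => S.indicator (1 : (Fin q → ℝ) → ℝ) (ξ ω) *
          (μ[fun ω' => T.indicator (1 : (Fin mm → ℝ) → ℝ) (W ω') | MeasurableSpace.comap ξ inferInstance]) ω) *
          (μ[η | MeasurableSpace.comap ξ inferInstance]) :=
      condExp_mul_of_stronglyMeasurable_left hk_G hkηint hηint
    calc ∫ ω, η ω * (S.indicator 1 (ξ ω) *
          (μ[fun ω' => T.indicator (1 : (Fin mm → ℝ) → ℝ) (W ω') | MeasurableSpace.comap ξ inferInstance]) ω) ∂μ
        = ∫ ω, (S.indicator 1 (ξ ω) *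
            (μ[fun ω' => T.indicator (1 : (Fin mm → ℝ) → ℝ) (W ω') | MeasurableSpace.comap ξ inferInstance]) ω) * η ω ∂μ :=
          integral_congr_ae (Filter.Eventually.of_forall fun ω => by ring)
      _ = ∫ ω, (μ[(fun ω => S.indicator (1 : (Fin q → ℝ) → ℝ) (ξ ω) *
            (μ[fun ω' => T.indicator (1 : (Fin mm → ℝ) → ℝ) (W ω') | MeasurableSpace.comap ξ inferInstance]) ω) * η | MeasurableSpace.comap ξ inferInstance]) ω ∂μ :=
          (integral_condExp hG).symm
      _ = ∫ ω, (S.indicator 1 (ξ ω) *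
            (μ[fun ω' => T.indicator (1 : (Fin mm → ℝ) → ℝ) (W ω') | MeasurableSpace.comap ξ inferInstance]) ω) *
            (μ[η | MeasurableSpace.comap ξ inferInstance]) ω ∂μ := integral_congr_ae hpull4
      _ = ∫ ω, (S.indicator 1 (ξ ω) *
            (μ[fun ω' => T.indicator (1 : (Fin mm → ℝ) → ℝ) (W ω') | MeasurableSpace.comap ξ inferInstance]) ω) * mf ω ∂μ := by
          refine integral_congr_ae ?_
          filter_upwards [hlin] with ω hω
          rw [hω]
      _ = ∫ ω, mf ω * (S.indicator 1 (ξ ω) *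
            (μ[fun ω' => T.indicator (1 : (Fin mm → ℝ) → ℝ) (W ω') | MeasurableSpace.comap ξ inferInstance]) ω) ∂μ :=
          integral_congr_ae (Filter.Eventually.of_forall fun ω => by ring)
  -- conclude
  have hint_η : Integrable (fun ω => η ω * (S.indicator 1 (ξ ω) * T.indicator 1 (W ω))) μ :=
    (Integrable.bdd_mul (c := 1) hηint (hiSmeas.mul hiTmeas).aestronglyMeasurable
      (Filter.Eventually.of_forall fun ω => by
        simpa [Real.norm_eq_abs, abs_mul] using hiSiT_bd ω)).congr
      (Filter.Eventually.of_forall fun ω => by simp only [Pi.mul_apply]; ring)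
  have hint_mf : Integrable (fun ω => mf ω * (S.indicator 1 (ξ ω) * T.indicator 1 (W ω))) μ :=
    (Integrable.bdd_mul (c := 1) hmfint (hiSmeas.mul hiTmeas).aestronglyMeasurable
      (Filter.Eventually.of_forall fun ω => by
        simpa [Real.norm_eq_abs, abs_mul] using hiSiT_bd ω)).congr
      (Filter.Eventually.of_forall fun ω => by simp only [Pi.mul_apply]; ring)
  calc ∫ ω, (η ω - mf ω) * (S.indicator 1 (ξ ω) * T.indicator 1 (W ω)) ∂μ
      = ∫ ω, (η ω * (S.indicator 1 (ξ ω) * T.indicator 1 (W ω))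
          - mf ω * (S.indicator 1 (ξ ω) * T.indicator 1 (W ω))) ∂μ :=
        integral_congr_ae (Filter.Eventually.of_forall fun ω => by ring)
    _ = ∫ ω, η ω * (S.indicator 1 (ξ ω) * T.indicator 1 (W ω)) ∂μ
          - ∫ ω, mf ω * (S.indicator 1 (ξ ω) * T.indicator 1 (W ω)) ∂μ :=
        integral_sub hint_η hint_mf
    _ = 0 := by rw [EAB, step3, step4]; ring


lemma resid_perp_all {Ω : Type*} [MeasurableSpace Ω] {μ : Measure Ω} [IsProbabilityMeasure μ]
    {q mm : ℕ} {ξ : Ω → Fin q → ℝ} {W : Ω → Fin mm → ℝ} {r : Ω → ℝ}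
    (hξmeas : Measurable ξ) (hWmeas : Measurable W) (hrmeas : Measurable r)
    (hrint : Integrable r μ)
    (hrect : ∀ (S : Set (Fin q → ℝ)) (T : Set (Fin mm → ℝ)), MeasurableSet S → MeasurableSet T →
      ∫ ω, r ω * (S.indicator 1 (ξ ω) * T.indicator 1 (W ω)) ∂μ = 0)
    (φ : (Fin q → ℝ) × (Fin mm → ℝ) → ℝ) (hφ : Measurable φ) (B : ℝ) (hB : ∀ x, |φ x| ≤ B) :
    ∫ ω, r ω * φ (ξ ω, W ω) ∂μ = 0 := by
  classical
  have hpmeas : Measurable (fun ω => (ξ ω, W ω)) := hξmeas.prodMk hWmeas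
  -- set integrals of r vanish on rectangles
  have hsetint : ∀ (S : Set (Fin q → ℝ)) (T : Set (Fin mm → ℝ)),
      MeasurableSet S → MeasurableSet T →
      ∫ ω in ξ ⁻¹' S ∩ W ⁻¹' T, r ω ∂μ = 0 := by
    intro S T hS hT
    have hA : MeasurableSet (ξ ⁻¹' S ∩ W ⁻¹' T) := (hξmeas hS).inter (hWmeas hT)
    rw [← integral_indicator hA]
    rw [← hrect S T hS hT]
    refine integral_congr_ae (Filter.Eventually.of_forall fun ω => ?_)
    by_cases h1 : ξ ω ∈ S <;> by_cases h2 : W ω ∈ T <;>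
      simp [Set.indicator_apply, h1, h2, Set.mem_inter_iff, Set.mem_preimage]
  -- equality of positive/negative-part lintegrals on measurable sets with zero integral
  have hfin : ∀ (g : Ω → ℝ) (A : Set Ω), (∀ ω, |g ω| ≤ |r ω|) →
      ∫⁻ ω in A, ENNReal.ofReal (g ω) ∂μ ≠ ⊤ := by
    intro g A hg
    refine ne_of_lt (lt_of_le_of_lt ?_ hrint.2)
    refine le_trans (setLIntegral_le_lintegral _ _) (lintegral_mono fun ω => ?_)
    calc ENNReal.ofReal (g ω) ≤ ENNReal.ofReal (|r ω|) :=
          ENNReal.ofReal_le_ofReal (le_trans (le_abs_self _) (hg ω))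
      _ = ‖r ω‖ₑ := by rw [← Real.norm_eq_abs, ofReal_norm_eq_enorm]
  have lint_eq : ∀ (A : Set Ω), MeasurableSet A → (∫ ω in A, r ω ∂μ = 0) →
      ∫⁻ ω in A, ENNReal.ofReal (r ω) ∂μ = ∫⁻ ω in A, ENNReal.ofReal (-r ω) ∂μ := by
    intro A hA h0
    have hint : Integrable r (μ.restrict A) := hrint.restrict
    have := integral_eq_lintegral_pos_part_sub_lintegral_neg_part hint
    rw [h0] at this
    have h1 := hfin r A (fun ω => le_refl _)
    have h2 := hfin (fun ω => -r ω) A (fun ω => by rw [abs_neg])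
    refine (ENNReal.toReal_eq_toReal_iff' h1 h2).mp ?_
    linarith [this]
  -- the two pushforward measures
  have hd1 : Measurable (fun ω => ((r ω).toNNReal : ℝ≥0∞)) :=
    (measurable_coe_nnreal_ennreal.comp (continuous_real_toNNReal.measurable.comp hrmeas))
  have hd2 : Measurable (fun ω => ((-r ω).toNNReal : ℝ≥0∞)) :=
    (measurable_coe_nnreal_ennreal.comp (continuous_real_toNNReal.measurable.comp hrmeas.neg))
  set ν₁ : Measure ((Fin q → ℝ) × (Fin mm → ℝ)) :=
    (μ.withDensity fun ω => ((r ω).toNNReal : ℝ≥0∞)).map (fun ω => (ξ ω, W ω)) with hν₁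
  set ν₂ : Measure ((Fin q → ℝ) × (Fin mm → ℝ)) :=
    (μ.withDensity fun ω => ((-r ω).toNNReal : ℝ≥0∞)).map (fun ω => (ξ ω, W ω)) with hν₂
  have hofReal : ∀ x : ℝ, ((x.toNNReal : ℝ≥0∞)) = ENNReal.ofReal x := fun x => rfl
  have happ : ∀ (g : Ω → ℝ), Measurable (fun ω => ((g ω).toNNReal : ℝ≥0∞)) →
      ∀ (s : Set ((Fin q → ℝ) × (Fin mm → ℝ))), MeasurableSet s →
      ((μ.withDensity fun ω => ((g ω).toNNReal : ℝ≥0∞)).map (fun ω => (ξ ω, W ω))) s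
        = ∫⁻ ω in (fun ω => (ξ ω, W ω)) ⁻¹' s, ENNReal.ofReal (g ω) ∂μ := by
    intro g hg s hs
    rw [Measure.map_apply hpmeas hs, withDensity_apply _ (hpmeas hs)]
    rfl
  have hν₁fin : IsFiniteMeasure ν₁ := by
    constructor
    rw [hν₁, happ r hd1 Set.univ MeasurableSet.univ]
    exact lt_top_iff_ne_top.mpr (hfin r _ fun ω => le_refl _)
  
  have hν₂fin : IsFiniteMeasure ν₂ := by
    constructor
    rw [hν₂, happ _ hd2 Set.univ MeasurableSet.univ]
    exact lt_top_iff_ne_top.mpr (hfin _ _ fun ω => by rw [abs_neg])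
  -- the two measures agree
  have hνeq : ν₁ = ν₂ := by
    haveI := hν₁fin
    refine ext_of_generate_finite _ generateFrom_prod.symm isPiSystem_prod ?_ ?_
    · rintro s ⟨S, hS, T, hT, rfl⟩
      have hS' : MeasurableSet S := hS
      have hT' : MeasurableSet T := hT
      rw [hν₁, hν₂, happ r hd1 _ (hS'.prod hT'), happ _ hd2 _ (hS'.prod hT'),
        Set.mk_preimage_prod]
      exact lint_eq _ ((hξmeas hS').inter (hWmeas hT')) (hsetint S T hS' hT')
    · rw [hν₁, hν₂, happ r hd1 _ MeasurableSet.univ, happ _ hd2 _ MeasurableSet.univ]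
      have hsets : (fun ω => (ξ ω, W ω)) ⁻¹' Set.univ
          = ξ ⁻¹' Set.univ ∩ W ⁻¹' Set.univ := by simp
      rw [hsets]
      exact lint_eq _ ((hξmeas MeasurableSet.univ).inter (hWmeas MeasurableSet.univ))
        (hsetint _ _ MeasurableSet.univ MeasurableSet.univ)
  -- express the two integrals against the pushforwards
  have hint1 : ∫ x, φ x ∂ν₁ = ∫ ω, max (r ω) 0 * φ (ξ ω, W ω) ∂μ := by
    rw [hν₁, integral_map hpmeas.aemeasurable hφ.aestronglyMeasurable,
      integral_withDensity_eq_integral_smul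
        (f := fun ω => (r ω).toNNReal)
        (continuous_real_toNNReal.measurable.comp hrmeas) _]
    refine integral_congr_ae (Filter.Eventually.of_forall fun ω => ?_)
    simp [NNReal.smul_def, Real.coe_toNNReal']
  have hint2 : ∫ x, φ x ∂ν₂ = ∫ ω, max (-r ω) 0 * φ (ξ ω, W ω) ∂μ := by
    rw [hν₂, integral_map hpmeas.aemeasurable hφ.aestronglyMeasurable,
      integral_withDensity_eq_integral_smul
        (f := fun ω => (-r ω).toNNReal)
        (continuous_real_toNNReal.measurable.comp hrmeas.neg) _]
    refine integral_congr_ae (Filter.Eventually.of_forall fun ω => ?_)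
    simp [NNReal.smul_def, Real.coe_toNNReal']
  -- integrability of the two pieces
  have hφbd : ∀ᵐ ω ∂μ, ‖φ (ξ ω, W ω)‖ ≤ B :=
    Filter.Eventually.of_forall fun ω => by
      simpa [Real.norm_eq_abs] using hB (ξ ω, W ω)
  have hig1 : Integrable (fun ω => max (r ω) 0 * φ (ξ ω, W ω)) μ :=
    (Integrable.bdd_mul (c := B) hrint.pos_part
      (hφ.comp hpmeas).aestronglyMeasurable hφbd).congr
      (Filter.Eventually.of_forall fun ω => by
        simp only [Function.comp_apply]; ring)
  have hig2 : Integrable (fun ω => max (-r ω) 0 * φ (ξ ω, W ω)) μ :=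
    (Integrable.bdd_mul (c := B) hrint.neg.pos_part
      (hφ.comp hpmeas).aestronglyMeasurable hφbd).congr
      (Filter.Eventually.of_forall fun ω => by
        simp only [Function.comp_apply, Pi.neg_apply]; ring)
  calc ∫ ω, r ω * φ (ξ ω, W ω) ∂μ
      = ∫ ω, (max (r ω) 0 * φ (ξ ω, W ω) - max (-r ω) 0 * φ (ξ ω, W ω)) ∂μ := by
        refine integral_congr_ae (Filter.Eventually.of_forall fun ω => ?_)
        show r ω * φ (ξ ω, W ω)
            = max (r ω) 0 * φ (ξ ω, W ω) - max (-r ω) 0 * φ (ξ ω, W ω)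
        have hd : max (r ω) 0 * φ (ξ ω, W ω) - max (-r ω) 0 * φ (ξ ω, W ω)
            = (max (r ω) 0 - max (-r ω) 0) * φ (ξ ω, W ω) := by ring
        rw [hd, max_zero_sub_max_neg_zero_eq_self]
    _ = ∫ ω, max (r ω) 0 * φ (ξ ω, W ω) ∂μ - ∫ ω, max (-r ω) 0 * φ (ξ ω, W ω) ∂μ :=
        integral_sub hig1 hig2
    _ = ∫ x, φ x ∂ν₁ - ∫ x, φ x ∂ν₂ := by rw [hint1, hint2]
    _ = 0 := by rw [hνeq, sub_self]


/-- If the conditional expectation of `η` given `σ(ξ)` is linear and `σ(η)`,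
`σ(W)` are conditionally independent given `σ(ξ)`, then the residual `η − E*(η | ξ)` is
orthogonal to every bounded measurable function `φ(ξ, W)`, and consequently
`E[Cov*(η, φ(ξ, W) | ξ)] = 0`. -/
theorem residual_orthogonal_of_condIndep {Ω : Type*} [MeasurableSpace Ω] (μ : Measure Ω)
    [IsProbabilityMeasure μ] {q m : ℕ}
    (ξ : Ω → Fin q → ℝ) (η : Ω → ℝ) (W : Ω → Fin m → ℝ)
    (hξmeas : Measurable ξ) (hηmeas : Measurable η) (hWmeas : Measurable W)
    (hη : MemLp η 4 μ) (hξ : ∀ i, MemLp (fun ω => ξ ω i) 4 μ)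
    (hVar : IsUnit (varMatrix μ ξ))
    -- (a) the conditional expectation of `η` given `σ(ξ)` is linear
    (hlin : μ[η | MeasurableSpace.comap ξ inferInstance] =ᵐ[μ] scle μ η ξ)
    -- (b) `σ(η)` and `σ(W)` are conditionally independent given `σ(ξ)`
    (hci : ∀ (f : ℝ → ℝ) (g : (Fin m → ℝ) → ℝ), Measurable f → Measurable g →
      (∃ Bf, ∀ x, |f x| ≤ Bf) → (∃ Bg, ∀ x, |g x| ≤ Bg) →
      μ[fun ω => f (η ω) * g (W ω) | MeasurableSpace.comap ξ inferInstance]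
        =ᵐ[μ] fun ω => ((μ[fun ω' => f (η ω') | MeasurableSpace.comap ξ inferInstance]) ω)
          * ((μ[fun ω' => g (W ω') | MeasurableSpace.comap ξ inferInstance]) ω)) :
    ∀ φ : (Fin q → ℝ) × (Fin m → ℝ) → ℝ, Measurable φ → (∃ B, ∀ x, |φ x| ≤ B) →
      (∫ ω, (η ω - scle μ η ξ ω) * φ (ξ ω, W ω) ∂μ = 0) ∧
      (∫ ω, ccov μ η (fun ω' => φ (ξ ω', W ω')) ξ ω ∂μ = 0) :=
  by
  intro φ hφ hBex
  obtain ⟨B, hB⟩ := hBex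
  have hG : MeasurableSpace.comap ξ inferInstance ≤ ‹MeasurableSpace Ω› := hξmeas.comap_le
  have hη2 : MemLp η 2 μ := hη.mono_exponent (by norm_num)
  have hηint : Integrable η μ :=
    memLp_one_iff_integrable.mp (hη.mono_exponent (by norm_num))
  have hξ2 : ∀ i, MemLp (fun ω => ξ ω i) 2 μ :=
    fun i => (hξ i).mono_exponent (by norm_num)
  have hξ1 : ∀ i, Integrable (fun ω => ξ ω i) μ :=
    fun i => memLp_one_iff_integrable.mp ((hξ i).mono_exponent (by norm_num))
  have hmf_G : StronglyMeasurable[MeasurableSpace.comap ξ inferInstance] (scle μ η ξ) :=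
    stronglyMeasurable_scle_comap ξ η
  have hmf2 : MemLp (scle μ η ξ) 2 μ := memLp_scle hξ2 η
  have hmfint : Integrable (scle μ η ξ) μ := memLp_one_iff_integrable.mp
    (memLp_scle (fun i => (hξ i).mono_exponent (by norm_num)) η)
  have hmfmeas : Measurable (scle μ η ξ) := ((hmf_G.mono hG)).measurable
  have hrmeas : Measurable (fun ω => η ω - scle μ η ξ ω) := hηmeas.sub hmfmeas
  have hrint : Integrable (fun ω => η ω - scle μ η ξ ω) μ := hηint.sub hmfint
  have hr2 : MemLp (fun ω => η ω - scle μ η ξ ω) 2 μ := hη2.sub hmf2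
  have hpmeas : Measurable (fun ω => (ξ ω, W ω)) := hξmeas.prodMk hWmeas
  -- rectangles
  have hrect : ∀ (S : Set (Fin q → ℝ)) (T : Set (Fin m → ℝ)),
      MeasurableSet S → MeasurableSet T →
      ∫ ω, (η ω - scle μ η ξ ω) * (S.indicator 1 (ξ ω) * T.indicator 1 (W ω)) ∂μ = 0 :=
    fun S T hS hT =>
      rect_zero hξmeas hηmeas hWmeas hηint hmf_G hmfint hlin hci hS hT
  -- Part 1
  have part1 : ∫ ω, (η ω - scle μ η ξ ω) * φ (ξ ω, W ω) ∂μ = 0 :=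
    resid_perp_all hξmeas hWmeas hrmeas hrint hrect φ hφ B hB
  refine ⟨part1, ?_⟩
  -- Part 2
  have hζ2meas : Measurable (fun ω => φ (ξ ω, W ω)) := hφ.comp hpmeas
  have hζ2_2 : MemLp (fun ω => φ (ξ ω, W ω)) 2 μ := by
    refine MemLp.of_bound hζ2meas.aestronglyMeasurable B
      (Filter.Eventually.of_forall fun ω => ?_)
    simpa [Real.norm_eq_abs] using hB (ξ ω, W ω)
  have hs2 : MemLp (scle μ (fun ω => φ (ξ ω, W ω)) ξ) 2 μ := memLp_scle hξ2 _
  have hsint : Integrable (scle μ (fun ω => φ (ξ ω, W ω)) ξ) μ :=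
    memLp_one_iff_integrable.mp (hs2.mono_exponent (by norm_num))
  have hr0 : ∫ ω, (η ω - scle μ η ξ ω) ∂μ = 0 := by
    rw [integral_sub hηint hmfint, integral_scle hξ1 η, sub_self]
  have horth : ∀ j, ∫ ω, (η ω - scle μ η ξ ω) * (ξ ω j - vmean μ ξ j) ∂μ = 0 :=
    fun j => resid_orth hξ2 hη2 hVar j
  -- ∫ r * scle(ζ2) = 0
  have hrs0 : ∫ ω, (η ω - scle μ η ξ ω) * scle μ (fun ω' => φ (ξ ω', W ω')) ξ ω ∂μ = 0 := by
    have hexp : ∀ ω, (η ω - scle μ η ξ ω) * scle μ (fun ω' => φ (ξ ω', W ω')) ξ ω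
        = (∫ ω', φ (ξ ω', W ω') ∂μ) * (η ω - scle μ η ξ ω)
          + ∑ i, covVec μ (fun ω' => φ (ξ ω', W ω')) ξ i *
              ∑ j, (varMatrix μ ξ)⁻¹ i j *
                ((η ω - scle μ η ξ ω) * (ξ ω j - vmean μ ξ j)) := by
      intro ω
      rw [scle_eq ξ (fun ω' => φ (ξ ω', W ω')), mul_add, mul_comm ((η ω - scle μ η ξ ω))]
      congr 1
      rw [Finset.mul_sum]
      refine Finset.sum_congr rfl fun i _ => ?_
      have hcomm : ∀ (b S : ℝ), (η ω - scle μ η ξ ω) * (b * S) = b * (S * (η ω - scle μ η ξ ω)) :=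
        fun b S => by ring
      rw [hcomm, Finset.sum_mul]
      exact congrArg _ (Finset.sum_congr rfl fun j _ => by ring)
    have hint_rj : ∀ j : Fin q,
        Integrable (fun ω => (η ω - scle μ η ξ ω) * (ξ ω j - vmean μ ξ j)) μ :=
      fun j => integrable_mul_of_L2 hr2 ((hξ2 j).sub (memLp_const _))
    have hint_term : ∀ (i j : Fin q), Integrable (fun ω => (varMatrix μ ξ)⁻¹ i j *
        ((η ω - scle μ η ξ ω) * (ξ ω j - vmean μ ξ j))) μ :=
      fun i j => (hint_rj j).const_mul _
    have hint_sum : ∀ i : Fin q, Integrable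
        (fun ω => covVec μ (fun ω' => φ (ξ ω', W ω')) ξ i *
          ∑ j, (varMatrix μ ξ)⁻¹ i j *
            ((η ω - scle μ η ξ ω) * (ξ ω j - vmean μ ξ j))) μ :=
      fun i => (integrable_finset_sum _ fun j _ => hint_term i j).const_mul _
    calc ∫ ω, (η ω - scle μ η ξ ω) * scle μ (fun ω' => φ (ξ ω', W ω')) ξ ω ∂μ
        = ∫ ω, ((∫ ω', φ (ξ ω', W ω') ∂μ) * (η ω - scle μ η ξ ω)
          + ∑ i, covVec μ (fun ω' => φ (ξ ω', W ω')) ξ i *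
              ∑ j, (varMatrix μ ξ)⁻¹ i j *
                ((η ω - scle μ η ξ ω) * (ξ ω j - vmean μ ξ j))) ∂μ :=
          integral_congr_ae (Filter.Eventually.of_forall fun ω => hexp ω)
      _ = 0 := by
          rw [integral_add (hrint.const_mul _) (integrable_finset_sum _ fun i _ => hint_sum i),
            integral_const_mul, hr0, mul_zero, integral_finset_sum _ fun i _ => hint_sum i]
          have : ∀ i : Fin q, ∫ ω, covVec μ (fun ω' => φ (ξ ω', W ω')) ξ i *
              ∑ j, (varMatrix μ ξ)⁻¹ i j *
                ((η ω - scle μ η ξ ω) * (ξ ω j - vmean μ ξ j)) ∂μ = 0 := by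
            intro i
            rw [integral_const_mul, integral_finset_sum _ fun j _ => hint_term i j]
            simp only [integral_const_mul, horth, mul_zero, Finset.sum_const_zero]
          simp [this]
  -- integrability of the two parts of the product
  have hrζint : Integrable (fun ω => (η ω - scle μ η ξ ω) * φ (ξ ω, W ω)) μ :=
    (Integrable.bdd_mul (c := B) hrint hζ2meas.aestronglyMeasurable
      (Filter.Eventually.of_forall fun ω => by
        simpa [Real.norm_eq_abs] using hB (ξ ω, W ω))).congr
      (Filter.Eventually.of_forall fun ω => by ring)
  have hrsint : Integrable (fun ω => (η ω - scle μ η ξ ω) *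
      scle μ (fun ω' => φ (ξ ω', W ω')) ξ ω) μ := integrable_mul_of_L2 hr2 hs2
  calc ∫ ω, ccov μ η (fun ω' => φ (ξ ω', W ω')) ξ ω ∂μ
      = ∫ ω, (η ω - scle μ η ξ ω) *
          (φ (ξ ω, W ω) - scle μ (fun ω' => φ (ξ ω', W ω')) ξ ω) ∂μ :=
        integral_scle hξ1 _
    _ = ∫ ω, ((η ω - scle μ η ξ ω) * φ (ξ ω, W ω)
          - (η ω - scle μ η ξ ω) * scle μ (fun ω' => φ (ξ ω', W ω')) ξ ω) ∂μ :=
        integral_congr_ae (Filter.Eventually.of_forall fun ω => by ring)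
    _ = ∫ ω, (η ω - scle μ η ξ ω) * φ (ξ ω, W ω) ∂μ
          - ∫ ω, (η ω - scle μ η ξ ω) * scle μ (fun ω' => φ (ξ ω', W ω')) ξ ω ∂μ :=
        integral_sub hrζint hrsint
    _ = 0 := by rw [part1, hrs0, sub_self]
end

section
/- (Theorem 3, part 1, fixed-sample form) Fix integers n ≥ 1, q ≥ 0, a finite index set M with |M| = w, and constants M₀ > 0, c₂ > 0, K₂ > 0, 0 < κ < 1/2, 0 < ε₁ ≤ n^{−κ}/2, ε₂ ≥ 0, with n^{−κ} ≤ 6/(K₂ M₀ c₂). Suppose for each j ∈ M: (i) θ_j ∈ ℝ^{q+1} is a fixed vector and θ̂_j: Ω → ℝ^{q+1} a random vector; (ii) there are ℝ^{q+1}-valued random vectors V̂_j(θ̂_j) and V̂_j(θ_j) (the estimating function evaluated at θ̂_j and θ_j) with V̂_j(θ̂_j) = 0 almost surely and M₀ ‖θ̂_j − θ_j‖₂ ≤ ‖V̂_j(θ̂_j) − V̂_j(θ_j)‖₂ almost surely; (iii) V̂_j(θ_j) = (1/n) Σ_{i=1}^n W_{i,j} + Δ_j, where W_{1,j},…,W_{n,j}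 are i.i.d. mean-zero ℝ^{q+1}-valued random vectors each of whose coordinates is bounded by K₂ almost surely, and Δ_j is a random vector; (iv) P(∃ j ∈ M: ‖Δ_j‖₂ > M₀ c₂ ε₁ / 2) ≤ ε₂. Writing β̂_j and β_j for the last coordinates of θ̂_j and θ_j, it holds that P( max_{j∈M} |β̂_j − β_j| > (c₂/2) n^{−κ} ) ≤ 2 w (q+1) exp(−c₃ n^{1−2κ}) + ε₂, where c₃ := M₀² c₂² / (32 (q+1) (K₂² + 1)). -/
open MeasureTheory ProbabilityTheory Filter
open scoped ENNReal NNReal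

lemma iIndepFun_congr_aeeq {ι Ω : Type*} {mΩ : MeasurableSpace Ω} {μ : Measure Ω}
    {β : ι → Type*} [mβ : ∀ i, MeasurableSpace (β i)] {f g : ∀ i, Ω → β i}
    (h : iIndepFun f μ) (hfg : ∀ i, f i =ᵐ[μ] g i) : iIndepFun g μ := by
  rw [iIndepFun_iff_measure_inter_preimage_eq_mul] at h ⊢
  intro S sets hsets
  have hpre : ∀ i, (f i ⁻¹' sets i : Set Ω) =ᵐ[μ] (g i ⁻¹' sets i) := fun i =>
    (hfg i).mono fun ω hω => by exact congrArg (· ∈ sets i) hω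
  have h1 : (⋂ i ∈ S, f i ⁻¹' sets i : Set Ω) =ᵐ[μ] (⋂ i ∈ S, g i ⁻¹' sets i) := by
    apply EventuallyEq.countable_bInter S.countable_toSet
    intro i _; exact hpre i
  rw [← measure_congr h1, h S hsets]
  exact Finset.prod_congr rfl fun i _ => measure_congr (hpre i)

lemma mgf_le_of_bdd {Ω : Type*} {mΩ : MeasurableSpace Ω} {μ : Measure Ω}
    [IsProbabilityMeasure μ] {X : Ω → ℝ} {K : ℝ} (l : ℝ) (hK : 0 < K)
    (hX : Measurable X) (hbdd : ∀ᵐ ω ∂μ, |X ω| ≤ K) (hmean : ∫ ω, X ω ∂μ = 0) :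
    mgf X μ l ≤ Real.exp (l ^ 2 * K ^ 2 / 2) := by
  set c₁ := Real.exp (-(l * K)) with hc₁
  set c₂ := Real.exp (l * K) with hc₂
  have hXint : Integrable X μ :=
    (integrable_const K).mono' hX.aestronglyMeasurable
      (hbdd.mono fun ω h => by simpa [Real.norm_eq_abs] using h)
  have hpt : ∀ᵐ ω ∂μ, Real.exp (l * X ω) ≤ (c₁ + c₂) / 2 + (c₂ - c₁) / (2 * K) * X ω := by
    filter_upwards [hbdd] with ω hω
    have habs := abs_le.1 hω
    set a := (K - X ω) / (2 * K) with ha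
    set b := (K + X ω) / (2 * K) with hb
    have ha0 : 0 ≤ a := div_nonneg (by linarith) (by linarith)
    have hb0 : 0 ≤ b := div_nonneg (by linarith) (by linarith)
    have hab : a + b = 1 := by rw [ha, hb]; field_simp; ring
    have hcomb : a * (-(l * K)) + b * (l * K) = l * X ω := by
      rw [ha, hb]; field_simp; ring
    have := convexOn_exp.2 (Set.mem_univ (-(l * K))) (Set.mem_univ (l * K)) ha0 hb0 hab
    rw [smul_eq_mul, smul_eq_mul, hcomb] at this
    calc Real.exp (l * X ω) ≤ a * c₁ + b * c₂ := this
      _ = (c₁ + c₂) / 2 + (c₂ - c₁) / (2 * K) * X ω := by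
          rw [ha, hb]; field_simp; ring
  have hint2 : Integrable (fun ω => (c₁ + c₂) / 2 + (c₂ - c₁) / (2 * K) * X ω) μ :=
    (integrable_const _).add (hXint.const_mul _)
  have hintexp : Integrable (fun ω => Real.exp (l * X ω)) μ := by
    refine (integrable_const (Real.exp (|l| * K))).mono'
      ((hX.const_mul l).exp).aestronglyMeasurable ?_
    filter_upwards [hbdd] with ω hω
    have hh : l * X ω ≤ |l| * K := by
      calc l * X ω ≤ |l * X ω| := le_abs_self _
        _ = |l| * |X ω| := abs_mul l (X ω)
        _ ≤ |l| * K := by gcongr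
    simpa [Real.norm_eq_abs, abs_of_pos (Real.exp_pos _), Real.exp_le_exp] using hh
  have h1 : mgf X μ l ≤ ∫ ω, ((c₁ + c₂) / 2 + (c₂ - c₁) / (2 * K) * X ω) ∂μ :=
    integral_mono_ae hintexp hint2 hpt
  have h2 : ∫ ω, ((c₁ + c₂) / 2 + (c₂ - c₁) / (2 * K) * X ω) ∂μ = (c₁ + c₂) / 2 := by
    rw [integral_add (integrable_const _) (hXint.const_mul _), integral_const,
      integral_const_mul, hmean]
    simp
  have h3 : (c₁ + c₂) / 2 = Real.cosh (l * K) := by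
    rw [Real.cosh_eq]; ring
  calc mgf X μ l ≤ (c₁ + c₂) / 2 := h2 ▸ h1
    _ = Real.cosh (l * K) := h3
    _ ≤ Real.exp ((l * K) ^ 2 / 2) := Real.cosh_le_exp_half_sq _
    _ = Real.exp (l ^ 2 * K ^ 2 / 2) := by ring_nf

lemma hoeffding_tail {Ω : Type*} {mΩ : MeasurableSpace Ω} {μ : Measure Ω}
    [IsProbabilityMeasure μ] (n : ℕ) (X : Fin n → Ω → ℝ) (K t : ℝ)
    (hK : 0 < K) (ht : 0 < t)
    (hmeas : ∀ i, Measurable (X i))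
    (hind : iIndepFun X μ)
    (hmean : ∀ i, ∫ ω, X i ω ∂μ = 0)
    (hbdd : ∀ i, ∀ᵐ ω ∂μ, |X i ω| ≤ K) :
    μ {ω | (n : ℝ) * t ≤ ∑ i, X i ω} ≤
      ENNReal.ofReal (Real.exp (-(n : ℝ) * t ^ 2 / (2 * K ^ 2))) := by
  set l := t / K ^ 2 with hl
  have hl0 : 0 ≤ l := le_of_lt (by positivity)
  set S := ∑ i, X i with hS
  have hSfun : S = fun ω => ∑ i, X i ω := by ext ω; simp [hS, Finset.sum_apply]
  have hSmeas : Measurable S := by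
    rw [hSfun]; exact Finset.measurable_sum _ fun i _ => hmeas i
  have hSbdd : ∀ᵐ ω ∂μ, |S ω| ≤ (n : ℝ) * K := by
    have := ae_all_iff.2 hbdd
    filter_upwards [this] with ω hω
    calc |S ω| = |∑ i, X i ω| := by rw [hS]; simp [Finset.sum_apply]
      _ ≤ ∑ i, |X i ω| := Finset.abs_sum_le_sum_abs _ _
      _ ≤ ∑ _i : Fin n, K := Finset.sum_le_sum fun i _ => hω i
      _ = (n : ℝ) * K := by simp [mul_comm]
  have hintexp : Integrable (fun ω => Real.exp (l * S ω)) μ := by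
    refine (integrable_const (Real.exp (l * ((n : ℝ) * K)))).mono'
      ((hSmeas.const_mul l).exp).aestronglyMeasurable ?_
    filter_upwards [hSbdd] with ω hω
    rw [Real.norm_eq_abs, abs_of_pos (Real.exp_pos _), Real.exp_le_exp]
    have : S ω ≤ (n : ℝ) * K := (abs_le.1 hω).2
    exact mul_le_mul_of_nonneg_left this hl0
  have hcher := measure_ge_le_exp_mul_mgf (μ := μ) (X := S) ((n : ℝ) * t) hl0 hintexp
  have hmgf : mgf S μ l ≤ Real.exp ((n : ℝ) * (l ^ 2 * K ^ 2 / 2)) := by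
    rw [hS, hind.mgf_sum hmeas]
    calc ∏ i : Fin n, mgf (X i) μ l
        ≤ ∏ _i : Fin n, Real.exp (l ^ 2 * K ^ 2 / 2) :=
          Finset.prod_le_prod (fun i _ => mgf_nonneg)
            (fun i _ => mgf_le_of_bdd l hK (hmeas i) (hbdd i) (hmean i))
      _ = Real.exp ((n : ℝ) * (l ^ 2 * K ^ 2 / 2)) := by
          rw [Finset.prod_const, ← Real.exp_nat_mul]; simp
  have hfin : μ {ω | (n : ℝ) * t ≤ S ω} ≠ ⊤ := measure_ne_top _ _
  have key : (μ {ω | (n : ℝ) * t ≤ S ω}).toReal ≤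
      Real.exp (-(n : ℝ) * t ^ 2 / (2 * K ^ 2)) := by
    calc (μ {ω | (n : ℝ) * t ≤ S ω}).toReal
        ≤ Real.exp (-l * ((n : ℝ) * t)) * mgf S μ l := hcher
      _ ≤ Real.exp (-l * ((n : ℝ) * t)) * Real.exp ((n : ℝ) * (l ^ 2 * K ^ 2 / 2)) := by
          gcongr
      _ = Real.exp (-l * ((n : ℝ) * t) + (n : ℝ) * (l ^ 2 * K ^ 2 / 2)) :=
          (Real.exp_add _ _).symm
      _ = Real.exp (-(n : ℝ) * t ^ 2 / (2 * K ^ 2)) := by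
          congr 1
          rw [hl]
          field_simp
          ring
  have hev : {ω | (n : ℝ) * t ≤ ∑ i, X i ω} = {ω | (n : ℝ) * t ≤ S ω} := by
    ext ω; simp [hSfun]
  rw [hev, ← ENNReal.ofReal_toReal hfin]
  exact ENNReal.ofReal_le_ofReal key

lemma euclid_sum_apply {m : ℕ} {α : Type*} (s : Finset α)
    (f : α → EuclideanSpace ℝ (Fin m)) (i : Fin m) :
    (∑ j ∈ s, f j) i = ∑ j ∈ s, f j i := by
  classical
  induction s using Finset.induction_on with
  | empty => simp
  | insert _ _ h ih => rw [Finset.sum_insert h, Finset.sum_insert h, PiLp.add_apply, ih]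

lemma euclid_abs_coord_le_norm {m : ℕ} (x : EuclideanSpace ℝ (Fin m)) (k : Fin m) :
    |x k| ≤ ‖x‖ := by
  rw [EuclideanSpace.norm_eq, ← Real.sqrt_sq_eq_abs]
  apply Real.sqrt_le_sqrt
  have : x k ^ 2 = ‖x k‖ ^ 2 := by rw [Real.norm_eq_abs, sq_abs]
  rw [this]
  exact Finset.single_le_sum (fun i _ => sq_nonneg ‖x i‖) (Finset.mem_univ k)

set_option maxHeartbeats 1000000 in
/-- Theorem 3, part 1, fixed-sample form: deviation bound for the
conditional maximum partial likelihood screening estimators. -/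
theorem coxcs_deviation_bound {Ω : Type*} [MeasurableSpace Ω] (μ : Measure Ω)
    [IsProbabilityMeasure μ] {ι : Type*} (M : Finset ι) (n q : ℕ)
    (M₀ c₂ K₂ κ ε₁ ε₂ : ℝ)
    (θ : ι → EuclideanSpace ℝ (Fin (q + 1)))
    (θhat : ι → Ω → EuclideanSpace ℝ (Fin (q + 1)))
    (Vhat : ι → Ω → EuclideanSpace ℝ (Fin (q + 1)))   -- `V̂_j(θ̂_j)`
    (Vθ : ι → Ω → EuclideanSpace ℝ (Fin (q + 1)))     -- `V̂_j(θ_j)`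
    (W : Fin n → ι → Ω → EuclideanSpace ℝ (Fin (q + 1)))
    (Δ : ι → Ω → EuclideanSpace ℝ (Fin (q + 1)))
    (hn : 1 ≤ n) (hM₀ : 0 < M₀) (hc₂ : 0 < c₂) (hK₂ : 0 < K₂)
    (hκ0 : 0 < κ) (hκ : κ < 1 / 2)
    (hε₁0 : 0 < ε₁) (hε₁ : ε₁ ≤ (n : ℝ) ^ (-κ) / 2) (hε₂ : 0 ≤ ε₂)
    (hnκ : (n : ℝ) ^ (-κ) ≤ 6 / (K₂ * M₀ * c₂))
    -- (ii) the sample score vanishes at `θ̂_j` and the inversion condition holds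
    (hzero : ∀ j ∈ M, ∀ᵐ ω ∂μ, Vhat j ω = 0)
    (hinv : ∀ j ∈ M, ∀ᵐ ω ∂μ,
      M₀ * ‖θhat j ω - θ j‖ ≤ ‖Vhat j ω - Vθ j ω‖)
    -- (iii) i.i.d.-plus-remainder representation of the sample score at `θ_j`
    (hrep : ∀ j ∈ M, ∀ ω, Vθ j ω = (n : ℝ)⁻¹ • (∑ i, W i j ω) + Δ j ω)
    (hindep : ∀ j ∈ M, iIndepFun (fun i => W i j) μ)
    (hident : ∀ j ∈ M, ∀ i i' : Fin n, IdentDistrib (W i j) (W i' j) μ μ)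
    (hmean : ∀ j ∈ M, ∀ (i : Fin n) (k : Fin (q + 1)), ∫ ω, W i j ω k ∂μ = 0)
    (hbdd : ∀ j ∈ M, ∀ (i : Fin n) (k : Fin (q + 1)), ∀ᵐ ω ∂μ, |W i j ω k| ≤ K₂)
    -- (iv) the remainders are uniformly small with probability at least `1 − ε₂`
    (hΔ : μ {ω | ∃ j ∈ M, M₀ * c₂ * ε₁ / 2 < ‖Δ j ω‖} ≤ ENNReal.ofReal ε₂) :
    μ {ω | ∃ j ∈ M,
        c₂ / 2 * (n : ℝ) ^ (-κ) < |θhat j ω (Fin.last q) - θ j (Fin.last q)|}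
      ≤ ENNReal.ofReal
          (2 * M.card * (q + 1) *
              Real.exp (-(M₀ ^ 2 * c₂ ^ 2 / (32 * (q + 1) * (K₂ ^ 2 + 1)))
                * (n : ℝ) ^ (1 - 2 * κ))
            + ε₂) := by
  classical
  have hn0 : (0 : ℝ) < n := by exact_mod_cast Nat.lt_of_lt_of_le Nat.zero_lt_one hn
  set nκ : ℝ := (n : ℝ) ^ (-κ) with hnκdef
  have hnκ0 : 0 < nκ := Real.rpow_pos_of_pos hn0 _
  set sq : ℝ := Real.sqrt ((q : ℝ) + 1) with hsqdef
  have hq1 : (0 : ℝ) < (q : ℝ) + 1 := by positivity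
  have hsq0 : 0 < sq := Real.sqrt_pos.2 hq1
  have hsqsq : sq ^ 2 = (q : ℝ) + 1 := Real.sq_sqrt hq1.le
  set t : ℝ := M₀ * c₂ * nκ / (4 * sq) with htdef
  have ht0 : 0 < t := by positivity
  set E : ℝ := Real.exp (-(M₀ ^ 2 * c₂ ^ 2 / (32 * ((q : ℝ) + 1) * (K₂ ^ 2 + 1)))
                * (n : ℝ) ^ (1 - 2 * κ)) with hEdef
  have hE0 : 0 ≤ E := (Real.exp_pos _).le
  -- arithmetic: the Hoeffding exponent dominates the target exponent
  have hpow : (n : ℝ) * nκ ^ 2 = (n : ℝ) ^ (1 - 2 * κ) := by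
    rw [hnκdef, ← Real.rpow_natCast ((n : ℝ) ^ (-κ)) 2, ← Real.rpow_mul hn0.le]
    rw [show ((n : ℝ) : ℝ) * (n : ℝ) ^ (-κ * (2 : ℕ)) =
        (n : ℝ) ^ (1 : ℝ) * (n : ℝ) ^ (-κ * (2 : ℕ)) by rw [Real.rpow_one]]
    rw [← Real.rpow_add hn0]
    norm_num
    ring_nf
  have hE : Real.exp (-(n : ℝ) * t ^ 2 / (2 * K₂ ^ 2)) ≤ E := by
    rw [hEdef, Real.exp_le_exp]
    have htsq : t ^ 2 = M₀ ^ 2 * c₂ ^ 2 * nκ ^ 2 / (16 * ((q : ℝ) + 1)) := by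
      rw [htdef]
      rw [div_pow]
      rw [show (4 * sq) ^ 2 = 16 * sq ^ 2 by ring, hsqsq]
      ring
    rw [htsq]
    have h1 : -(n : ℝ) * (M₀ ^ 2 * c₂ ^ 2 * nκ ^ 2 / (16 * ((q : ℝ) + 1))) / (2 * K₂ ^ 2)
        = -(((n : ℝ) * nκ ^ 2) * (M₀ ^ 2 * c₂ ^ 2 / (32 * ((q : ℝ) + 1) * K₂ ^ 2))) := by
      field_simp
      ring
    rw [h1, hpow]
    rw [show -(M₀ ^ 2 * c₂ ^ 2 / (32 * ((q : ℝ) + 1) * (K₂ ^ 2 + 1))) * (n : ℝ) ^ (1 - 2 * κ)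
        = -((n : ℝ) ^ (1 - 2 * κ) * (M₀ ^ 2 * c₂ ^ 2 / (32 * ((q : ℝ) + 1) * (K₂ ^ 2 + 1))))
        by ring]
    apply neg_le_neg
    gcongr
    nlinarith [hq1]
  -- per-coordinate Hoeffding bound
  have key : ∀ j ∈ M, ∀ k : Fin (q + 1), ∀ e : ℝ, (e = 1 ∨ e = -1) →
      μ {ω | (n : ℝ) * t ≤ ∑ i, e * W i j ω k} ≤ ENNReal.ofReal E := by
    intro j hj k e he
    have haem : ∀ i, AEMeasurable (W i j) μ := fun i => (hident j hj i i).aemeasurable_fst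
    set Y : Fin n → Ω → EuclideanSpace ℝ (Fin (q + 1)) := fun i => (haem i).mk (W i j) with hY
    have hYmeas : ∀ i, Measurable (Y i) := fun i => (haem i).measurable_mk
    have hYeq : ∀ i, W i j =ᵐ[μ] Y i := fun i => (haem i).ae_eq_mk
    set X : Fin n → Ω → ℝ := fun i ω => e * Y i ω k with hX
    have hproj : Measurable (fun x : EuclideanSpace ℝ (Fin (q + 1)) => e * x k) :=
      measurable_const.mul (EuclideanSpace.proj (𝕜 := ℝ) k).continuous.measurable
    have hXmeas : ∀ i, Measurable (X i) := fun i => hproj.comp (hYmeas i)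
    have hXind : iIndepFun X μ := by
      have h1 := iIndepFun_congr_aeeq (hindep j hj) hYeq
      exact h1.comp (fun _ x => e * x k) (fun _ => hproj)
    have he1 : |e| = 1 := by rcases he with h | h <;> simp [h]
    have hXmean : ∀ i, ∫ ω, X i ω ∂μ = 0 := by
      intro i
      have hcoord : (fun ω => Y i ω k) =ᵐ[μ] fun ω => W i j ω k :=
        (hYeq i).mono fun ω hω => by simp only [hω]
      simp only [hX]
      rw [integral_const_mul, integral_congr_ae hcoord, hmean j hj i k, mul_zero]
    have hXbdd : ∀ i, ∀ᵐ ω ∂μ, |X i ω| ≤ K₂ := by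
      intro i
      filter_upwards [hbdd j hj i k, hYeq i] with ω h1 h2
      simp only [hX]
      rw [abs_mul, he1, one_mul, ← h2]
      exact h1
    have hb := hoeffding_tail n X K₂ t hK₂ ht0 hXmeas hXind hXmean hXbdd
    have hevent : {ω | (n : ℝ) * t ≤ ∑ i, e * W i j ω k}
        =ᵐ[μ] {ω | (n : ℝ) * t ≤ ∑ i, X i ω} := by
      apply Filter.eventuallyEq_set.2
      have hall : ∀ᵐ ω ∂μ, ∀ i, W i j ω = Y i ω := ae_all_iff.2 hYeq
      filter_upwards [hall] with ω hω
      have hsum : ∑ i, e * W i j ω k = ∑ i, X i ω :=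
        Finset.sum_congr rfl fun i _ => by simp only [hX, hω i]
      exact iff_of_eq (congrArg (fun z => (n : ℝ) * t ≤ z) hsum)
    rw [measure_congr hevent]
    exact hb.trans (ENNReal.ofReal_le_ofReal hE)
  -- events
  set D := {ω | ∃ j ∈ M, M₀ * c₂ * ε₁ / 2 < ‖Δ j ω‖} with hDdef
  set A : ι → Fin (q + 1) → ℝ → Set Ω :=
    fun j k e => {ω | (n : ℝ) * t ≤ ∑ i, e * W i j ω k} with hAdef
  set U := ⋃ j ∈ M, ⋃ k, (A j k 1 ∪ A j k (-1)) with hUdef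
  have hz : ∀ᵐ ω ∂μ, ∀ j ∈ M, Vhat j ω = 0 :=
    (ae_ball_iff M.countable_toSet).2 hzero
  have hi : ∀ᵐ ω ∂μ, ∀ j ∈ M, M₀ * ‖θhat j ω - θ j‖ ≤ ‖Vhat j ω - Vθ j ω‖ :=
    (ae_ball_iff M.countable_toSet).2 hinv
  have hsub : {ω | ∃ j ∈ M, c₂ / 2 * nκ < |θhat j ω (Fin.last q) - θ j (Fin.last q)|}
      ≤ᵐ[μ] (D ∪ U : Set Ω) := by
    filter_upwards [hz, hi] with ω hzω hiω hbad
    obtain ⟨j, hj, hcoord⟩ := hbad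
    by_cases hDω : ω ∈ D
    · exact Or.inl hDω
    right
    have hΔsmall : ‖Δ j ω‖ ≤ M₀ * c₂ * nκ / 4 := by
      simp only [hDdef, Set.mem_setOf_eq, not_exists, not_and, not_lt] at hDω
      have h := hDω j hj
      calc ‖Δ j ω‖ ≤ M₀ * c₂ * ε₁ / 2 := h
        _ ≤ M₀ * c₂ * (nκ / 2) / 2 := by gcongr
        _ = M₀ * c₂ * nκ / 4 := by ring
    set x : EuclideanSpace ℝ (Fin (q + 1)) := (n : ℝ)⁻¹ • ∑ i, W i j ω with hxdef
    have hst : sq * t = M₀ * c₂ * nκ / 4 := by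
      rw [htdef]; field_simp
    have hxnorm : sq * t < ‖x‖ := by
      have h2 : |θhat j ω (Fin.last q) - θ j (Fin.last q)| ≤ ‖θhat j ω - θ j‖ := by
        have h := euclid_abs_coord_le_norm (θhat j ω - θ j) (Fin.last q)
        rwa [PiLp.sub_apply] at h
      have h3 : M₀ * ‖θhat j ω - θ j‖ ≤ ‖Vθ j ω‖ := by
        have h := hiω j hj
        rwa [hzω j hj, zero_sub, norm_neg] at h
      have h4 : ‖Vθ j ω‖ ≤ ‖x‖ + ‖Δ j ω‖ := by
        rw [hrep j hj ω]; exact norm_add_le _ _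
      have h5 : M₀ * (c₂ / 2 * nκ) < M₀ * |θhat j ω (Fin.last q) - θ j (Fin.last q)| :=
        mul_lt_mul_of_pos_left hcoord hM₀
      have h6 : M₀ * |θhat j ω (Fin.last q) - θ j (Fin.last q)|
          ≤ M₀ * ‖θhat j ω - θ j‖ := mul_le_mul_of_nonneg_left h2 hM₀.le
      have h7 : M₀ * (c₂ / 2 * nκ) = M₀ * c₂ * nκ / 2 := by ring
      linarith
    have hk : ∃ k, t < |x k| := by
      by_contra hcon
      push_neg at hcon
      have hle : ‖x‖ ≤ sq * t := by
        rw [EuclideanSpace.norm_eq]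
        have hsum : ∑ i, ‖x i‖ ^ 2 ≤ ∑ _i : Fin (q + 1), t ^ 2 := by
          apply Finset.sum_le_sum
          intro i _
          rw [Real.norm_eq_abs]
          exact pow_le_pow_left₀ (abs_nonneg _) (hcon i) 2
        calc Real.sqrt (∑ i, ‖x i‖ ^ 2) ≤ Real.sqrt (((q : ℝ) + 1) * t ^ 2) := by
              apply Real.sqrt_le_sqrt
              simpa [Finset.sum_const, Finset.card_univ, nsmul_eq_mul] using hsum
          _ = sq * t := by
              rw [Real.sqrt_mul hq1.le, hsqdef, Real.sqrt_sq ht0.le]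
      linarith
    obtain ⟨k, hkx⟩ := hk
    have hxk : x k = (n : ℝ)⁻¹ * ∑ i, W i j ω k := by
      rw [hxdef, PiLp.smul_apply, smul_eq_mul, euclid_sum_apply]
    have hnne : (n : ℝ) ≠ 0 := ne_of_gt hn0
    refine Set.mem_biUnion hj (Set.mem_iUnion.2 ⟨k, ?_⟩)
    rcases lt_abs.1 hkx with hpos | hneg
    · left
      show (n : ℝ) * t ≤ ∑ i, (1 : ℝ) * W i j ω k
      have hsum : ∑ i, (1 : ℝ) * W i j ω k = (n : ℝ) * x k := by
        rw [hxk]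
        simp only [one_mul]
        rw [← mul_assoc, mul_inv_cancel₀ hnne, one_mul]
      rw [hsum]
      have := mul_lt_mul_of_pos_left hpos hn0
      linarith
    · right
      show (n : ℝ) * t ≤ ∑ i, (-1 : ℝ) * W i j ω k
      have hsum : ∑ i, (-1 : ℝ) * W i j ω k = (n : ℝ) * (-x k) := by
        rw [hxk]
        simp only [neg_one_mul]
        rw [Finset.sum_neg_distrib, mul_neg, ← mul_assoc, mul_inv_cancel₀ hnne, one_mul]
      rw [hsum]
      have := mul_lt_mul_of_pos_left hneg hn0
      linarith
  -- union bound
  have hcard : μ U ≤ (M.card : ℝ≥0∞) * ((q + 1 : ℕ) : ℝ≥0∞) * (2 * ENNReal.ofReal E) := by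
    calc μ U ≤ ∑ j ∈ M, μ (⋃ k, (A j k 1 ∪ A j k (-1))) := by
          rw [hUdef]; exact measure_biUnion_finset_le _ _
      _ ≤ ∑ j ∈ M, ∑ k : Fin (q + 1), μ (A j k 1 ∪ A j k (-1)) := by
          apply Finset.sum_le_sum
          intro j _
          exact measure_iUnion_fintype_le _ _
      _ ≤ ∑ j ∈ M, ∑ _k : Fin (q + 1), (2 * ENNReal.ofReal E) := by
          apply Finset.sum_le_sum
          intro j hj
          apply Finset.sum_le_sum
          intro k _
          calc μ (A j k 1 ∪ A j k (-1)) ≤ μ (A j k 1) + μ (A j k (-1)) :=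
                measure_union_le _ _
            _ ≤ ENNReal.ofReal E + ENNReal.ofReal E :=
                add_le_add (key j hj k 1 (Or.inl rfl)) (key j hj k (-1) (Or.inr rfl))
            _ = 2 * ENNReal.ofReal E := by rw [two_mul]
      _ = (M.card : ℝ≥0∞) * ((q + 1 : ℕ) : ℝ≥0∞) * (2 * ENNReal.ofReal E) := by
          simp [Finset.sum_const, Finset.card_univ, mul_assoc]
  calc μ {ω | ∃ j ∈ M, c₂ / 2 * nκ < |θhat j ω (Fin.last q) - θ j (Fin.last q)|}
      ≤ μ (D ∪ U) := measure_mono_ae hsub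
    _ ≤ μ D + μ U := measure_union_le _ _
    _ ≤ ENNReal.ofReal ε₂ + (M.card : ℝ≥0∞) * ((q + 1 : ℕ) : ℝ≥0∞)
          * (2 * ENNReal.ofReal E) := add_le_add hΔ hcard
    _ ≤ ENNReal.ofReal (2 * M.card * ((q : ℝ) + 1) * E + ε₂) := by
        have h2 : (2 : ℝ≥0∞) = ENNReal.ofReal 2 := by norm_num
        have hmn : (0:ℝ) ≤ (M.card : ℝ) := Nat.cast_nonneg _
        have hqn : (0:ℝ) ≤ ((q + 1 : ℕ) : ℝ) := Nat.cast_nonneg _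
        have h02 : (0:ℝ) ≤ 2 := by norm_num
        rw [← ENNReal.ofReal_natCast M.card, ← ENNReal.ofReal_natCast (q + 1), h2,
          ← ENNReal.ofReal_mul hmn,
          ← ENNReal.ofReal_mul h02,
          ← ENNReal.ofReal_mul (mul_nonneg hmn hqn),
          ← ENNReal.ofReal_add hε₂ (mul_nonneg (mul_nonneg hmn hqn) (mul_nonneg h02 hE0))]
        apply ENNReal.ofReal_le_ofReal
        apply le_of_eq
        push_cast
        ring
end
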